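/- If (u, v) is a Hofstadter G pair (i.e., u and v are nonnegative integers with u = G(v)), then (v, u+v) and (v+1, u+v+1) are Hofstadter G pairs; that is, G(u+v) = v and G(u+v+1) = v+1. -/

import Mathlib

noncomputable def goldenphi : ℝ := (1 + Real.sqrt 5) / 2

noncomputable def hofG (x : ℕ) : ℕ := (⌊((x : ℝ) + 1) / goldenphi⌋).toNat

lemma goldenphi_eq : goldenphi = Real.goldenRatio := rfl

lemma hofG_eq_floor (x : ℕ) : (hofG x : ℝ) ≤ ((x : ℝ) + 1) / goldenphi ∧
    ((x : ℝ) + 1) / goldenphi < hofG x + 1 := by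
  have hpos : (0:ℝ) ≤ ((x : ℝ) + 1) / goldenphi := by
    apply div_nonneg (by positivity)
    rw [goldenphi_eq]; exact le_of_lt Real.goldenRatio_pos
  have h1 : (hofG x : ℤ) = ⌊((x : ℝ) + 1) / goldenphi⌋ := by
    unfold hofG
    exact Int.toNat_of_nonneg (Int.floor_nonneg.mpr hpos)
  constructor
  · calc ((hofG x : ℕ) : ℝ) = ((hofG x : ℤ) : ℝ) := by push_cast; ring
      _ = ((⌊((x : ℝ) + 1) / goldenphi⌋ : ℤ) : ℝ) := by rw [h1]
      _ ≤ _ := Int.floor_le _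
  · have := Int.lt_floor_add_one (((x : ℝ) + 1) / goldenphi)
    calc ((x : ℝ) + 1) / goldenphi < (⌊((x : ℝ) + 1) / goldenphi⌋ : ℝ) + 1 := this
      _ = ((hofG x : ℤ) : ℝ) + 1 := by rw [h1]
      _ = (hofG x : ℝ) + 1 := by push_cast; ring

theorem stmt_2 (u v : ℕ) (h : u = hofG v) :
    hofG (u + v) = v ∧ hofG (u + v + 1) = v + 1 := by
  have hφ1 : (1:ℝ) < goldenphi := by rw [goldenphi_eq]; exact Real.one_lt_goldenRatio
  have hφ0 : (0:ℝ) < goldenphi := by linarith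
  have hsq : goldenphi * goldenphi = goldenphi + 1 := by
    have := Real.goldenRatio_sq; rw [goldenphi_eq]; nlinarith [this]
  obtain ⟨hle, hlt⟩ := hofG_eq_floor v
  rw [← h] at hle hlt
  -- u ≤ (v+1)/φ, strict since irrational
  have hne : (u : ℝ) ≠ ((v : ℝ) + 1) / goldenphi := by
    intro heq
    have hirr : Irrational goldenphi := by rw [goldenphi_eq]; exact Real.goldenRatio_irrational
    have hv1 : (0:ℝ) < (v:ℝ) + 1 := by positivity
    have hu0 : (u:ℝ) ≠ 0 := by
      intro h0
      rw [h0] at heq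
      have : ((v:ℝ) + 1) = 0 := by
        field_simp at heq; linarith
      linarith
    have hφeq : goldenphi = ((v : ℝ) + 1) / u := by
      field_simp at heq ⊢; linarith [heq]
    have : Irrational (((v : ℝ) + 1) / u) := hφeq ▸ hirr
    have h2 : (((v + 1 : ℚ) / (u:ℚ) : ℚ) : ℝ) = ((v : ℝ) + 1) / u := by push_cast; ring
    exact (h2 ▸ this) ⟨_, rfl⟩
  have hslt : (u : ℝ) < ((v : ℝ) + 1) / goldenphi := lt_of_le_of_ne hle hne
  have h1 : (u : ℝ) * goldenphi < (v : ℝ) + 1 := by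
    rw [div_eq_mul_inv] at hslt
    calc (u:ℝ) * goldenphi < (((v:ℝ)+1) * goldenphi⁻¹) * goldenphi := by
          exact mul_lt_mul_of_pos_right hslt hφ0
      _ = (v:ℝ) + 1 := by field_simp
  have h2 : (v : ℝ) + 1 < ((u:ℝ) + 1) * goldenphi := by
    rw [div_lt_iff₀ hφ0] at hlt; linarith
  constructor
  · -- hofG (u+v) = v
    have key : ⌊(((u+v : ℕ) : ℝ) + 1) / goldenphi⌋ = (v : ℤ) := by
      rw [Int.floor_eq_iff]
      push_cast
      constructor
      · rw [le_div_iff₀ hφ0]; nlinarith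
      · rw [div_lt_iff₀ hφ0]; nlinarith
    unfold hofG; rw [key]; rfl
  · have key : ⌊(((u+v+1 : ℕ) : ℝ) + 1) / goldenphi⌋ = ((v : ℤ) + 1) := by
      rw [Int.floor_eq_iff]
      push_cast
      constructor
      · rw [le_div_iff₀ hφ0]; nlinarith
      · rw [div_lt_iff₀ hφ0]; nlinarith
    unfold hofG; rw [key]
    omega
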